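/- Let n ≥ 5, let X and Y be adjacent vertices of the augmented cube AQ_n, and let Z = X̄_n, so that P = (Y, X, Z) is a path of length two in AQ_n (with Y ≠ Z). Then |N_{AQ_n}(P)| ≥ 6n − 15, where N_{AQ_n}(P) is the set of vertices outside {X, Y, Z} that are adjacent to at least one of X, Y, Z. -/

import Mathlib

/-- Flip the single bit at index `i` (paper bit `i+1`), i.e. the map `X ↦ X_{i+1}`. -/
def flipBit {n : ℕ} (i : Fin n) (X : Fin n → Bool) : Fin n → Bool :=
  fun j => if j = i then !(X j) else X j

/-- Flip all bits at indices `≤ i` (paper bits `i+1, i, …, 1`), i.e. the map `X ↦ X̄_{i+1}`. -/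
def flipDown {n : ℕ} (i : Fin n) (X : Fin n → Bool) : Fin n → Bool :=
  fun j => if j ≤ i then !(X j) else X j

lemma flipBit_flipBit {n : ℕ} (i : Fin n) (X : Fin n → Bool) :
    flipBit i (flipBit i X) = X := by
  funext j; by_cases h : j = i <;> simp [flipBit, h]

lemma flipDown_flipDown {n : ℕ} (i : Fin n) (X : Fin n → Bool) :
    flipDown i (flipDown i X) = X := by
  funext j; by_cases h : j ≤ i <;> simp [flipDown, h]

/-- The augmented cube `AQ_n`: vertices are `n`-bit strings; two distinct vertices `X, Y`
are adjacent iff `Y = X_i` for some `1 ≤ i ≤ n` (a hypercube edge) or `Y = X̄_i` for some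
`2 ≤ i ≤ n` (a complement edge).  Paper bit `i` corresponds to index `i - 1 : Fin n`. -/
def augCube (n : ℕ) : SimpleGraph (Fin n → Bool) where
  Adj X Y := X ≠ Y ∧
    ((∃ i : Fin n, Y = flipBit i X) ∨ (∃ i : Fin n, 1 ≤ i.val ∧ Y = flipDown i X))
  symm := by
    constructor
    rintro X Y ⟨hne, h⟩
    refine ⟨hne.symm, ?_⟩
    rcases h with ⟨i, rfl⟩ | ⟨i, hi, rfl⟩
    · exact Or.inl ⟨i, (flipBit_flipBit i X).symm⟩
    · exact Or.inr ⟨i, hi, (flipDown_flipDown i X).symm⟩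
  loopless := ⟨fun X h => h.1 rfl⟩

section AQhelp

variable {n : ℕ}

lemma flipBit_apply (i : Fin n) (V : Fin n → Bool) (t : Fin n) :
    flipBit i V t = xor (decide (t = i)) (V t) := by
  unfold flipBit; by_cases h : t = i <;> simp [h]

lemma flipDown_apply (i : Fin n) (V : Fin n → Bool) (t : Fin n) :
    flipDown i V t = xor (decide (t ≤ i)) (V t) := by
  unfold flipDown; by_cases h : t ≤ i <;> simp [h]

lemma xor_cancel_right' (a b c : Bool) : (xor a c = xor b c) ↔ a = b := by
  cases c <;> simp

lemma conv_11 {p r : Prop} [Decidable p] [Decidable r] {b : Bool}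
    (h : xor (decide p) b = xor (decide r) b) : p ↔ r := by
  cases b <;> by_cases hp : p <;> by_cases hr : r <;> simp_all

lemma conv_12 {p r s : Prop} [Decidable p] [Decidable r] [Decidable s] {b : Bool}
    (h : xor (decide p) b = xor (decide r) (xor (decide s) b)) : p ↔ ¬(r ↔ s) := by
  cases b <;> by_cases hp : p <;> by_cases hr : r <;> by_cases hs : s <;> simp_all

lemma conv_21 {p q r : Prop} [Decidable p] [Decidable q] [Decidable r] {b : Bool}
    (h : xor (decide p) (xor (decide q) b) = xor (decide r) b) : ¬(p ↔ q) ↔ r := by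
  cases b <;> by_cases hp : p <;> by_cases hq : q <;> by_cases hr : r <;> simp_all

lemma conv_22 {p q r s : Prop} [Decidable p] [Decidable q] [Decidable r] [Decidable s] {b : Bool}
    (h : xor (decide p) (xor (decide q) b) = xor (decide r) (xor (decide s) b)) :
    ¬(p ↔ q) ↔ ¬(r ↔ s) := by
  cases b <;> by_cases hp : p <;> by_cases hq : q <;> by_cases hr : r <;> by_cases hs : s <;>
    simp_all

/-- The neighborhood of a vertex as a `Finset`. -/
def nbhd {n : ℕ} (V : Fin n → Bool) : Finset (Fin n → Bool) :=
  (Finset.univ.image fun i => flipBit i V) ∪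
    ((Finset.univ.filter fun i : Fin n => 1 ≤ i.val).image fun i => flipDown i V)

lemma mem_nbhd {V W : Fin n → Bool} :
    W ∈ nbhd V ↔ (∃ i, flipBit i V = W) ∨ (∃ i : Fin n, 1 ≤ i.val ∧ flipDown i V = W) := by
  simp only [nbhd, Finset.mem_union, Finset.mem_image, Finset.mem_filter, Finset.mem_univ,
    true_and]

lemma flipBit_ne (i : Fin n) (V : Fin n → Bool) : flipBit i V ≠ V := by
  intro h
  have := congrFun h i
  simp [flipBit_apply] at this

lemma flipDown_ne (i : Fin n) (V : Fin n → Bool) : flipDown i V ≠ V := by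
  intro h
  have hpos : 0 < n := i.pos
  have := congrFun h ⟨0, hpos⟩
  have h0 : (⟨0, hpos⟩ : Fin n) ≤ i := by simp [Fin.le_def]
  simp [flipDown_apply, h0] at this

lemma mem_nbhd_ne {V W : Fin n → Bool} (h : W ∈ nbhd V) : W ≠ V := by
  rcases mem_nbhd.1 h with ⟨i, rfl⟩ | ⟨i, _, rfl⟩
  · exact flipBit_ne i V
  · exact flipDown_ne i V

lemma adj_iff {V W : Fin n → Bool} : (augCube n).Adj V W ↔ W ∈ nbhd V := by
  constructor
  · rintro ⟨hne, ⟨i, rfl⟩ | ⟨i, hi, rfl⟩⟩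
    · exact mem_nbhd.2 (Or.inl ⟨i, rfl⟩)
    · exact mem_nbhd.2 (Or.inr ⟨i, hi, rfl⟩)
  · intro h
    refine ⟨(mem_nbhd_ne h).symm, ?_⟩
    rcases mem_nbhd.1 h with ⟨i, rfl⟩ | ⟨i, hi, rfl⟩
    · exact Or.inl ⟨i, rfl⟩
    · exact Or.inr ⟨i, hi, rfl⟩

lemma flipBit_injective (V : Fin n → Bool) :
    Function.Injective fun i => flipBit i V := by
  intro i k h
  have hi := conv_11 (by
    simpa only [flipBit_apply] using congrFun h i)
  simp only [Fin.ext_iff, iff_true, true_iff] at hi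
  exact Fin.ext hi

lemma flipDown_injective (V : Fin n → Bool) :
    Function.Injective fun i => flipDown i V := by
  intro i k h
  have hi := conv_11 (by
    simpa only [flipDown_apply] using congrFun h i)
  have hk := conv_11 (by
    simpa only [flipDown_apply] using congrFun h k)
  simp only [Fin.le_def] at hi hk
  have h1 := i.isLt; have h2 := k.isLt
  exact Fin.ext (by omega)

lemma flipBit_ne_flipDown {i k : Fin n} (hk : 1 ≤ k.val) (V : Fin n → Bool) :
    flipBit i V ≠ flipDown k V := by
  intro h
  have hpos : 0 < n := i.pos
  have h0 := conv_11 (by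
    simpa only [flipBit_apply, flipDown_apply] using congrFun h ⟨0, hpos⟩)
  have hkk := conv_11 (by
    simpa only [flipBit_apply, flipDown_apply] using congrFun h k)
  simp only [Fin.ext_iff, Fin.le_def, Fin.val_mk] at h0 hkk
  omega

lemma card_filter_pos (hn : 1 ≤ n) :
    (Finset.univ.filter fun i : Fin n => 1 ≤ i.val).card = n - 1 := by
  have h : (Finset.univ.filter fun i : Fin n => 1 ≤ i.val) = Finset.univ \ {⟨0, hn⟩} := by
    ext i
    simp [Fin.ext_iff]
    omega
  rw [h, Finset.card_sdiff_of_subset (by simp)]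
  simp

lemma card_nbhd (V : Fin n → Bool) (hn : 1 ≤ n) : (nbhd V).card = 2 * n - 1 := by
  rw [nbhd, Finset.card_union_of_disjoint, Finset.card_image_of_injective _ (flipBit_injective V),
    Finset.card_image_of_injective _ (flipDown_injective V), card_filter_pos hn]
  · simp; omega
  · rw [Finset.disjoint_left]
    rintro a ha hb
    simp only [Finset.mem_image, Finset.mem_filter, Finset.mem_univ, true_and] at ha hb
    obtain ⟨i, rfl⟩ := ha
    obtain ⟨k, hk, hkeq⟩ := hb
    exact flipBit_ne_flipDown hk V hkeq.symm

lemma card_le_two {α : Type*} [DecidableEq α] (a b : α) : ({a, b} : Finset α).card ≤ 2 := by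
  apply (Finset.card_insert_le _ _).trans
  simp

lemma card_le_three {α : Type*} [DecidableEq α] (a b c : α) :
    ({a, b, c} : Finset α).card ≤ 3 := by
  apply (Finset.card_insert_le _ _).trans
  have := card_le_two b c
  omega

lemma card_le_four {α : Type*} [DecidableEq α] (a b c d : α) :
    ({a, b, c, d} : Finset α).card ≤ 4 := by
  apply (Finset.card_insert_le _ _).trans
  have := card_le_three b c d
  omega

lemma cv_B_BB {X : Fin n → Bool} {a : Fin n} {i j : Fin n}
    (h : flipBit a X = flipBit i (flipBit j X)) (t : Fin n) :
    (t.val = a.val) ↔ (¬((t.val = i.val) ↔ (t.val = j.val))) := by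
  have h' := congrFun h t
  simp only [flipBit_apply, flipDown_apply] at h'
  have := conv_12 h'
  simpa only [Fin.ext_iff, Fin.le_def] using this


lemma cv_B_DB {X : Fin n → Bool} {a : Fin n} {i j : Fin n}
    (h : flipBit a X = flipDown i (flipBit j X)) (t : Fin n) :
    (t.val = a.val) ↔ (¬((t.val ≤ i.val) ↔ (t.val = j.val))) := by
  have h' := congrFun h t
  simp only [flipBit_apply, flipDown_apply] at h'
  have := conv_12 h'
  simpa only [Fin.ext_iff, Fin.le_def] using this


lemma cv_B_BD {X : Fin n → Bool} {a : Fin n} {i j : Fin n}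
    (h : flipBit a X = flipBit i (flipDown j X)) (t : Fin n) :
    (t.val = a.val) ↔ (¬((t.val = i.val) ↔ (t.val ≤ j.val))) := by
  have h' := congrFun h t
  simp only [flipBit_apply, flipDown_apply] at h'
  have := conv_12 h'
  simpa only [Fin.ext_iff, Fin.le_def] using this


lemma cv_B_DD {X : Fin n → Bool} {a : Fin n} {i j : Fin n}
    (h : flipBit a X = flipDown i (flipDown j X)) (t : Fin n) :
    (t.val = a.val) ↔ (¬((t.val ≤ i.val) ↔ (t.val ≤ j.val))) := by
  have h' := congrFun h t
  simp only [flipBit_apply, flipDown_apply] at h'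
  have := conv_12 h'
  simpa only [Fin.ext_iff, Fin.le_def] using this


lemma cv_D_BB {X : Fin n → Bool} {a : Fin n} {i j : Fin n}
    (h : flipDown a X = flipBit i (flipBit j X)) (t : Fin n) :
    (t.val ≤ a.val) ↔ (¬((t.val = i.val) ↔ (t.val = j.val))) := by
  have h' := congrFun h t
  simp only [flipBit_apply, flipDown_apply] at h'
  have := conv_12 h'
  simpa only [Fin.ext_iff, Fin.le_def] using this


lemma cv_D_DB {X : Fin n → Bool} {a : Fin n} {i j : Fin n}
    (h : flipDown a X = flipDown i (flipBit j X)) (t : Fin n) :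
    (t.val ≤ a.val) ↔ (¬((t.val ≤ i.val) ↔ (t.val = j.val))) := by
  have h' := congrFun h t
  simp only [flipBit_apply, flipDown_apply] at h'
  have := conv_12 h'
  simpa only [Fin.ext_iff, Fin.le_def] using this


lemma cv_D_BD {X : Fin n → Bool} {a : Fin n} {i j : Fin n}
    (h : flipDown a X = flipBit i (flipDown j X)) (t : Fin n) :
    (t.val ≤ a.val) ↔ (¬((t.val = i.val) ↔ (t.val ≤ j.val))) := by
  have h' := congrFun h t
  simp only [flipBit_apply, flipDown_apply] at h'
  have := conv_12 h'
  simpa only [Fin.ext_iff, Fin.le_def] using this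


lemma cv_D_DD {X : Fin n → Bool} {a : Fin n} {i j : Fin n}
    (h : flipDown a X = flipDown i (flipDown j X)) (t : Fin n) :
    (t.val ≤ a.val) ↔ (¬((t.val ≤ i.val) ↔ (t.val ≤ j.val))) := by
  have h' := congrFun h t
  simp only [flipBit_apply, flipDown_apply] at h'
  have := conv_12 h'
  simpa only [Fin.ext_iff, Fin.le_def] using this


lemma cv_BD_BB {X : Fin n → Bool} {a b : Fin n} {i j : Fin n}
    (h : flipBit a (flipDown b X) = flipBit i (flipBit j X)) (t : Fin n) :
    (¬((t.val = a.val) ↔ (t.val ≤ b.val))) ↔ (¬((t.val = i.val) ↔ (t.val = j.val))) := by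
  have h' := congrFun h t
  simp only [flipBit_apply, flipDown_apply] at h'
  have := conv_22 h'
  simpa only [Fin.ext_iff, Fin.le_def] using this


lemma cv_BD_DB {X : Fin n → Bool} {a b : Fin n} {i j : Fin n}
    (h : flipBit a (flipDown b X) = flipDown i (flipBit j X)) (t : Fin n) :
    (¬((t.val = a.val) ↔ (t.val ≤ b.val))) ↔ (¬((t.val ≤ i.val) ↔ (t.val = j.val))) := by
  have h' := congrFun h t
  simp only [flipBit_apply, flipDown_apply] at h'
  have := conv_22 h'
  simpa only [Fin.ext_iff, Fin.le_def] using this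


lemma cv_BD_BD {X : Fin n → Bool} {a b : Fin n} {i j : Fin n}
    (h : flipBit a (flipDown b X) = flipBit i (flipDown j X)) (t : Fin n) :
    (¬((t.val = a.val) ↔ (t.val ≤ b.val))) ↔ (¬((t.val = i.val) ↔ (t.val ≤ j.val))) := by
  have h' := congrFun h t
  simp only [flipBit_apply, flipDown_apply] at h'
  have := conv_22 h'
  simpa only [Fin.ext_iff, Fin.le_def] using this


lemma cv_BD_DD {X : Fin n → Bool} {a b : Fin n} {i j : Fin n}
    (h : flipBit a (flipDown b X) = flipDown i (flipDown j X)) (t : Fin n) :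
    (¬((t.val = a.val) ↔ (t.val ≤ b.val))) ↔ (¬((t.val ≤ i.val) ↔ (t.val ≤ j.val))) := by
  have h' := congrFun h t
  simp only [flipBit_apply, flipDown_apply] at h'
  have := conv_22 h'
  simpa only [Fin.ext_iff, Fin.le_def] using this


lemma cv_DD_BB {X : Fin n → Bool} {a b : Fin n} {i j : Fin n}
    (h : flipDown a (flipDown b X) = flipBit i (flipBit j X)) (t : Fin n) :
    (¬((t.val ≤ a.val) ↔ (t.val ≤ b.val))) ↔ (¬((t.val = i.val) ↔ (t.val = j.val))) := by
  have h' := congrFun h t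
  simp only [flipBit_apply, flipDown_apply] at h'
  have := conv_22 h'
  simpa only [Fin.ext_iff, Fin.le_def] using this


lemma cv_DD_DB {X : Fin n → Bool} {a b : Fin n} {i j : Fin n}
    (h : flipDown a (flipDown b X) = flipDown i (flipBit j X)) (t : Fin n) :
    (¬((t.val ≤ a.val) ↔ (t.val ≤ b.val))) ↔ (¬((t.val ≤ i.val) ↔ (t.val = j.val))) := by
  have h' := congrFun h t
  simp only [flipBit_apply, flipDown_apply] at h'
  have := conv_22 h'
  simpa only [Fin.ext_iff, Fin.le_def] using this


lemma cv_DD_BD {X : Fin n → Bool} {a b : Fin n} {i j : Fin n}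
    (h : flipDown a (flipDown b X) = flipBit i (flipDown j X)) (t : Fin n) :
    (¬((t.val ≤ a.val) ↔ (t.val ≤ b.val))) ↔ (¬((t.val = i.val) ↔ (t.val ≤ j.val))) := by
  have h' := congrFun h t
  simp only [flipBit_apply, flipDown_apply] at h'
  have := conv_22 h'
  simpa only [Fin.ext_iff, Fin.le_def] using this


lemma cv_DD_DD {X : Fin n → Bool} {a b : Fin n} {i j : Fin n}
    (h : flipDown a (flipDown b X) = flipDown i (flipDown j X)) (t : Fin n) :
    (¬((t.val ≤ a.val) ↔ (t.val ≤ b.val))) ↔ (¬((t.val ≤ i.val) ↔ (t.val ≤ j.val))) := by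
  have h' := congrFun h t
  simp only [flipBit_apply, flipDown_apply] at h'
  have := conv_22 h'
  simpa only [Fin.ext_iff, Fin.le_def] using this


set_option maxHeartbeats 1000000 in
lemma goodP1 (hn : 5 ≤ n) (X : Fin n → Bool) (j i : Fin n)
    (hj1 : 1 ≤ j.val) (hj2 : j.val ≤ n - 2)
    (h1 : i.val ≠ j.val) (h2 : i.val ≠ j.val + 1) (h3 : j.val = 1 → i.val ≠ 0)
    (h4 : n - 3 ≤ j.val → i.val ≠ n - 1) :
    flipBit i (flipDown j X) ∉ nbhd X ∪ nbhd (flipDown ⟨n - 1, Nat.sub_lt (by omega) Nat.one_pos⟩ X) := by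
  intro hW
  have hin := i.isLt; have hjn := j.isLt
  have hq0 : 0 < n := by omega
  have hq1 : 1 < n := by omega
  have hq2 : 2 < n := by omega
  have hqn1 : n - 1 < n := by omega
  have hqn2 : n - 2 < n := by omega
  have hqn3 : n - 3 < n := by omega
  have hqj1 : j.val + 1 < n := by omega
  rw [Finset.mem_union, mem_nbhd, mem_nbhd] at hW
  rcases hW with (⟨a, ha⟩ | ⟨a, ha1, ha⟩) | (⟨a, ha⟩ | ⟨a, ha1, ha⟩)
  · have han := a.isLt
    have E := cv_B_BD ha
    have f0 := E ⟨0, hq0⟩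
    have f1 := E ⟨1, hq1⟩
    have f2 := E i
    have f3 := E j
    have f4 := E a
    simp only [Fin.val_mk, iff_true, true_iff, eq_self_iff_true, le_refl] at f0 f1 f2 f3 f4
    omega
  · have han := a.isLt
    have E := cv_D_BD ha
    have f0 := E ⟨0, hq0⟩
    have f1 := E i
    have f2 := E j
    have f3 := E ⟨j.val + 1, hqj1⟩
    have f4 := E a
    simp only [Fin.val_mk, iff_true, true_iff, eq_self_iff_true, le_refl] at f0 f1 f2 f3 f4
    omega
  · have han := a.isLt
    have E := cv_BD_BD ha
    have f0 := E i
    have f1 := E j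
    have f2 := E a
    have f3 := E ⟨n - 1, hqn1⟩
    have f4 := E ⟨n - 2, hqn2⟩
    have f5 := E ⟨n - 3, hqn3⟩
    simp only [Fin.val_mk, iff_true, true_iff, eq_self_iff_true, le_refl] at f0 f1 f2 f3 f4 f5
    omega
  · have han := a.isLt
    have E := cv_DD_BD ha
    have f0 := E ⟨0, hq0⟩
    have f1 := E ⟨1, hq1⟩
    have f2 := E i
    have f3 := E j
    have f4 := E ⟨n - 1, hqn1⟩
    simp only [Fin.val_mk, iff_true, true_iff, eq_self_iff_true, le_refl] at f0 f1 f2 f3 f4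
    omega


set_option maxHeartbeats 1000000 in
lemma goodP2 (hn : 5 ≤ n) (X : Fin n → Bool) (j i : Fin n)
    (hj1 : 1 ≤ j.val) (hj2 : j.val ≤ n - 2) (hi1 : 1 ≤ i.val)
    (h1 : i.val ≠ j.val - 1) (h2 : i.val ≠ j.val) (h3 : i.val ≠ j.val + 1)
    (h4 : i.val ≠ n - 1) :
    flipDown i (flipDown j X) ∉ nbhd X ∪ nbhd (flipDown ⟨n - 1, Nat.sub_lt (by omega) Nat.one_pos⟩ X) := by
  intro hW
  have hin := i.isLt; have hjn := j.isLt
  have hq0 : 0 < n := by omega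
  have hq1 : 1 < n := by omega
  have hq2 : 2 < n := by omega
  have hqn1 : n - 1 < n := by omega
  have hqn2 : n - 2 < n := by omega
  have hqn3 : n - 3 < n := by omega
  have hqj1 : j.val + 1 < n := by omega
  have hqi1 : i.val + 1 < n := by omega
  rw [Finset.mem_union, mem_nbhd, mem_nbhd] at hW
  rcases hW with (⟨a, ha⟩ | ⟨a, ha1, ha⟩) | (⟨a, ha⟩ | ⟨a, ha1, ha⟩)
  · have han := a.isLt
    have E := cv_B_DD ha
    have f0 := E ⟨0, hq0⟩
    have f1 := E i
    have f2 := E j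
    have f3 := E ⟨i.val + 1, hqi1⟩
    have f4 := E ⟨j.val + 1, hqj1⟩
    have f5 := E a
    simp only [Fin.val_mk, iff_true, true_iff, eq_self_iff_true, le_refl] at f0 f1 f2 f3 f4 f5
    omega
  · have han := a.isLt
    have E := cv_D_DD ha
    have f0 := E ⟨0, hq0⟩
    have f1 := E i
    have f2 := E j
    have f3 := E a
    simp only [Fin.val_mk, iff_true, true_iff, eq_self_iff_true, le_refl] at f0 f1 f2 f3
    omega
  · have han := a.isLt
    have E := cv_BD_DD ha
    have f0 := E ⟨0, hq0⟩
    have f1 := E i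
    have f2 := E j
    have f3 := E a
    simp only [Fin.val_mk, iff_true, true_iff, eq_self_iff_true, le_refl] at f0 f1 f2 f3
    omega
  · have han := a.isLt
    have E := cv_DD_DD ha
    have f0 := E ⟨0, hq0⟩
    have f1 := E i
    have f2 := E j
    have f3 := E ⟨n - 1, hqn1⟩
    have f4 := E a
    simp only [Fin.val_mk, iff_true, true_iff, eq_self_iff_true, le_refl] at f0 f1 f2 f3 f4
    omega


set_option maxHeartbeats 1000000 in
lemma goodE1 (hn : 5 ≤ n) (X : Fin n → Bool) (j i : Fin n)
    (h1 : i.val ≠ j.val) (h2 : j.val ≤ 1 → 2 ≤ i.val) (h3 : n - 2 ≤ j.val → i.val ≤ n - 3) :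
    flipBit i (flipBit j X) ∉ nbhd X ∪ nbhd (flipDown ⟨n - 1, Nat.sub_lt (by omega) Nat.one_pos⟩ X) := by
  intro hW
  have hin := i.isLt; have hjn := j.isLt
  have hq0 : 0 < n := by omega
  have hq1 : 1 < n := by omega
  have hq2 : 2 < n := by omega
  have hqn1 : n - 1 < n := by omega
  have hqn2 : n - 2 < n := by omega
  have hqn3 : n - 3 < n := by omega
  rw [Finset.mem_union, mem_nbhd, mem_nbhd] at hW
  rcases hW with (⟨a, ha⟩ | ⟨a, ha1, ha⟩) | (⟨a, ha⟩ | ⟨a, ha1, ha⟩)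
  · have han := a.isLt
    have E := cv_B_BB ha
    have f0 := E i
    have f1 := E j
    have f2 := E a
    simp only [Fin.val_mk, iff_true, true_iff, eq_self_iff_true, le_refl] at f0 f1 f2
    omega
  · have han := a.isLt
    have E := cv_D_BB ha
    have f0 := E ⟨0, hq0⟩
    have f1 := E ⟨1, hq1⟩
    have f2 := E i
    have f3 := E j
    have f4 := E a
    simp only [Fin.val_mk, iff_true, true_iff, eq_self_iff_true, le_refl] at f0 f1 f2 f3 f4
    omega
  · have han := a.isLt
    have E := cv_BD_BB ha
    have f0 := E ⟨0, hq0⟩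
    have f1 := E ⟨1, hq1⟩
    have f2 := E ⟨2, hq2⟩
    have f3 := E ⟨n - 2, hqn2⟩
    have f4 := E ⟨n - 1, hqn1⟩
    simp only [Fin.val_mk, iff_true, true_iff, eq_self_iff_true, le_refl] at f0 f1 f2 f3 f4
    omega
  · have han := a.isLt
    have E := cv_DD_BB ha
    have f0 := E i
    have f1 := E j
    have f2 := E ⟨n - 1, hqn1⟩
    have f3 := E ⟨n - 2, hqn2⟩
    have f4 := E ⟨n - 3, hqn3⟩
    simp only [Fin.val_mk, iff_true, true_iff, eq_self_iff_true, le_refl] at f0 f1 f2 f3 f4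
    omega


set_option maxHeartbeats 1000000 in
lemma goodE2 (hn : 5 ≤ n) (X : Fin n → Bool) (j i : Fin n)
    (hi1 : 1 ≤ i.val) (h1 : i.val ≠ j.val - 1) (h2 : i.val ≠ j.val) (h3 : i.val ≠ n - 1)
    (h4 : j.val = 0 → i.val ≠ 1) (h5 : n - 2 ≤ j.val → i.val ≠ n - 3) :
    flipDown i (flipBit j X) ∉ nbhd X ∪ nbhd (flipDown ⟨n - 1, Nat.sub_lt (by omega) Nat.one_pos⟩ X) := by
  intro hW
  have hin := i.isLt; have hjn := j.isLt
  have hq0 : 0 < n := by omega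
  have hq1 : 1 < n := by omega
  have hq2 : 2 < n := by omega
  have hqn1 : n - 1 < n := by omega
  have hqn2 : n - 2 < n := by omega
  have hqn3 : n - 3 < n := by omega
  have hqjm : j.val - 1 < n := by omega
  have hqi1 : i.val + 1 < n := by omega
  rw [Finset.mem_union, mem_nbhd, mem_nbhd] at hW
  rcases hW with (⟨a, ha⟩ | ⟨a, ha1, ha⟩) | (⟨a, ha⟩ | ⟨a, ha1, ha⟩)
  · have han := a.isLt
    have E := cv_B_DB ha
    have f0 := E ⟨0, hq0⟩
    have f1 := E ⟨1, hq1⟩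
    have f2 := E ⟨2, hq2⟩
    have f3 := E i
    have f4 := E j
    have f5 := E a
    simp only [Fin.val_mk, iff_true, true_iff, eq_self_iff_true, le_refl] at f0 f1 f2 f3 f4 f5
    omega
  · have han := a.isLt
    have E := cv_D_DB ha
    have f0 := E ⟨0, hq0⟩
    have f1 := E i
    have f2 := E j
    have f3 := E ⟨j.val - 1, hqjm⟩
    have f4 := E a
    simp only [Fin.val_mk, iff_true, true_iff, eq_self_iff_true, le_refl] at f0 f1 f2 f3 f4
    omega
  · have han := a.isLt
    have E := cv_BD_DB ha
    have f0 := E a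
    have f1 := E i
    have f2 := E j
    have f3 := E ⟨n - 1, hqn1⟩
    have f4 := E ⟨n - 2, hqn2⟩
    have f5 := E ⟨n - 3, hqn3⟩
    simp only [Fin.val_mk, iff_true, true_iff, eq_self_iff_true, le_refl] at f0 f1 f2 f3 f4 f5
    omega
  · have han := a.isLt
    have E := cv_DD_DB ha
    have f0 := E ⟨0, hq0⟩
    have f1 := E ⟨1, hq1⟩
    have f2 := E i
    have f3 := E j
    have f4 := E ⟨n - 1, hqn1⟩
    simp only [Fin.val_mk, iff_true, true_iff, eq_self_iff_true, le_refl] at f0 f1 f2 f3 f4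
    omega


set_option maxHeartbeats 1000000 in
lemma inter_sub (hn : 5 ≤ n) (X : Fin n → Bool) :
    nbhd X ∩ nbhd (flipDown ⟨n - 1, Nat.sub_lt (by omega) Nat.one_pos⟩ X) ⊆
      {flipBit ⟨n - 1, Nat.sub_lt (by omega) Nat.one_pos⟩ X, flipDown ⟨n - 2, by omega⟩ X} := by
  intro W hW
  have hq0 : 0 < n := by omega
  have hq1 : 1 < n := by omega
  have hq2 : 2 < n := by omega
  have hqn1 : n - 1 < n := by omega
  have hqn2 : n - 2 < n := by omega
  have hqn3 : n - 3 < n := by omega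
  rw [Finset.mem_inter] at hW
  obtain ⟨hX1, hZ1⟩ := hW
  rw [mem_nbhd] at hX1 hZ1
  rw [Finset.mem_insert, Finset.mem_singleton]
  rcases hX1 with ⟨a, ha⟩ | ⟨a, ha1, ha⟩ <;> rcases hZ1 with ⟨b, hb⟩ | ⟨b, hb1, hb⟩
  · exfalso
    have han := a.isLt; have hbn := b.isLt
    have E := cv_B_BD (ha.trans hb.symm)
    have f0 := E ⟨0, hq0⟩
    have f1 := E ⟨1, hq1⟩
    have f2 := E ⟨2, hq2⟩
    have f3 := E a
    have f4 := E b
    simp only [Fin.val_mk, iff_true, true_iff, eq_self_iff_true, le_refl] at f0 f1 f2 f3 f4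
    omega
  · have han := a.isLt; have hbn := b.isLt
    have E := cv_B_DD (ha.trans hb.symm)
    have f0 := E ⟨0, hq0⟩
    have f1 := E a
    have f2 := E b
    have f3 := E ⟨n - 1, hqn1⟩
    simp only [Fin.val_mk, iff_true, true_iff, eq_self_iff_true, le_refl] at f0 f1 f2 f3
    have hav : a = (⟨n - 1, hqn1⟩ : Fin n) := Fin.ext (by simp only [Fin.val_mk]; omega)
    rw [hav] at ha
    exact Or.inl ha.symm
  · have han := a.isLt; have hbn := b.isLt
    have E := cv_D_BD (ha.trans hb.symm)
    have f0 := E ⟨0, hq0⟩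
    have f1 := E a
    have f2 := E b
    have f3 := E ⟨n - 1, hqn1⟩
    have f4 := E ⟨n - 2, hqn2⟩
    simp only [Fin.val_mk, iff_true, true_iff, eq_self_iff_true, le_refl] at f0 f1 f2 f3 f4
    have hav : a = (⟨n - 2, hqn2⟩ : Fin n) := Fin.ext (by simp only [Fin.val_mk]; omega)
    rw [hav] at ha
    exact Or.inr ha.symm
  · exfalso
    have han := a.isLt; have hbn := b.isLt
    have E := cv_D_DD (ha.trans hb.symm)
    have f0 := E ⟨0, hq0⟩
    simp only [Fin.val_mk, iff_true, true_iff, eq_self_iff_true, le_refl] at f0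
    omega

set_option maxHeartbeats 1000000 in
lemma main_count (hn : 5 ≤ n) (X Y : Fin n → Bool) (hYa : (augCube n).Adj Y X)
    (G1 G2 : Finset (Fin n)) (hG2 : ∀ i ∈ G2, 1 ≤ i.val)
    (hc1 : n - 3 ≤ G1.card) (hc2 : n - 5 ≤ G2.card)
    (hg1 : ∀ i ∈ G1, flipBit i Y ∉ nbhd X ∪ nbhd (flipDown ⟨n - 1, Nat.sub_lt (by omega) Nat.one_pos⟩ X))
    (hg2 : ∀ i ∈ G2, flipDown i Y ∉ nbhd X ∪ nbhd (flipDown ⟨n - 1, Nat.sub_lt (by omega) Nat.one_pos⟩ X)) :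
    6 * n - 15 ≤ {W | W ∉ ({X, Y, flipDown ⟨n - 1, Nat.sub_lt (by omega) Nat.one_pos⟩ X} : Set (Fin n → Bool)) ∧
      ((augCube n).Adj X W ∨ (augCube n).Adj Y W ∨
        (augCube n).Adj (flipDown ⟨n - 1, Nat.sub_lt (by omega) Nat.one_pos⟩ X) W)}.ncard := by
  have hZX : flipDown ⟨n - 1, by omega⟩ X ∈ nbhd X := by
    refine mem_nbhd.2 (Or.inr ⟨⟨n - 1, by omega⟩, ?_, rfl⟩)
    simp only [Fin.val_mk]; omega
  have hXZ : X ∈ nbhd (flipDown ⟨n - 1, by omega⟩ X) := by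
    refine mem_nbhd.2 (Or.inr ⟨⟨n - 1, by omega⟩, ?_, flipDown_flipDown _ _⟩)
    simp only [Fin.val_mk]; omega
  have hBN : ∀ w ∈ (G1.image fun i => flipBit i Y) ∪ (G2.image fun i => flipDown i Y),
      w ∉ nbhd X ∪ nbhd (flipDown ⟨n - 1, by omega⟩ X) := by
    intro w hw
    rw [Finset.mem_union] at hw
    rcases hw with hw | hw <;> rw [Finset.mem_image] at hw <;> obtain ⟨i, hi, rfl⟩ := hw
    · exact hg1 i hi
    · exact hg2 i hi
  have hBY : ∀ w ∈ (G1.image fun i => flipBit i Y) ∪ (G2.image fun i => flipDown i Y),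
      w ∈ nbhd Y := by
    intro w hw
    rw [Finset.mem_union] at hw
    rcases hw with hw | hw <;> rw [Finset.mem_image] at hw <;> obtain ⟨i, hi, rfl⟩ := hw
    · exact mem_nbhd.2 (Or.inl ⟨i, rfl⟩)
    · exact mem_nbhd.2 (Or.inr ⟨i, hG2 i hi, rfl⟩)
  have hsub : ↑(((nbhd X ∪ nbhd (flipDown ⟨n - 1, by omega⟩ X)) \
        ({X, Y, flipDown ⟨n - 1, by omega⟩ X} : Finset (Fin n → Bool))) ∪
        ((G1.image fun i => flipBit i Y) ∪ (G2.image fun i => flipDown i Y))) ⊆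
      {W | W ∉ ({X, Y, flipDown ⟨n - 1, by omega⟩ X} : Set (Fin n → Bool)) ∧
        ((augCube n).Adj X W ∨ (augCube n).Adj Y W ∨
          (augCube n).Adj (flipDown ⟨n - 1, by omega⟩ X) W)} := by
    intro w hw
    rw [Finset.coe_union, Set.mem_union] at hw
    rcases hw with hw | hw
    · rw [Finset.mem_coe, Finset.mem_sdiff] at hw
      obtain ⟨hwN, hwns⟩ := hw
      refine ⟨?_, ?_⟩
      · intro hmem
        apply hwns
        simp only [Set.mem_insert_iff, Set.mem_singleton_iff] at hmem
        simp only [Finset.mem_insert, Finset.mem_singleton]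
        exact hmem
      · rw [Finset.mem_union] at hwN
        rcases hwN with h | h
        · exact Or.inl (adj_iff.2 h)
        · exact Or.inr (Or.inr (adj_iff.2 h))
    · rw [Finset.mem_coe] at hw
      have hwY := hBY w hw
      have hwN := hBN w hw
      refine ⟨?_, Or.inr (Or.inl (adj_iff.2 hwY))⟩
      intro hmem
      simp only [Set.mem_insert_iff, Set.mem_singleton_iff] at hmem
      rcases hmem with rfl | rfl | rfl
      · exact hwN (Finset.mem_union_right _ hXZ)
      · exact mem_nbhd_ne hwY rfl
      · exact hwN (Finset.mem_union_left _ hZX)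
  have hfin := Set.ncard_le_ncard hsub (Set.toFinite _)
  rw [Set.ncard_coe_finset] at hfin
  refine le_trans ?_ hfin
  have hdisjB : Disjoint (G1.image fun i => flipBit i Y) (G2.image fun i => flipDown i Y) := by
    rw [Finset.disjoint_left]
    intro w hw1 hw2
    rw [Finset.mem_image] at hw1 hw2
    obtain ⟨i, _, rfl⟩ := hw1
    obtain ⟨k, hk, hkeq⟩ := hw2
    exact flipBit_ne_flipDown (hG2 k hk) Y hkeq.symm
  have hdisj : Disjoint ((nbhd X ∪ nbhd (flipDown ⟨n - 1, by omega⟩ X)) \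
      ({X, Y, flipDown ⟨n - 1, by omega⟩ X} : Finset (Fin n → Bool)))
      ((G1.image fun i => flipBit i Y) ∪ (G2.image fun i => flipDown i Y)) := by
    rw [Finset.disjoint_right]
    intro w hw
    rw [Finset.mem_sdiff]
    rintro ⟨hwN, -⟩
    exact hBN w hw hwN
  rw [Finset.card_union_of_disjoint hdisj, Finset.card_union_of_disjoint hdisjB,
    Finset.card_image_of_injective _ (flipBit_injective Y),
    Finset.card_image_of_injective _ (flipDown_injective Y)]
  have hNk := Finset.card_union_add_card_inter (nbhd X) (nbhd (flipDown ⟨n - 1, by omega⟩ X))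
  have hint : (nbhd X ∩ nbhd (flipDown ⟨n - 1, by omega⟩ X)).card ≤ 2 :=
    le_trans (Finset.card_le_card (inter_sub hn X)) (card_le_two _ _)
  have hc3 : ({X, Y, flipDown ⟨n - 1, by omega⟩ X} : Finset (Fin n → Bool)).card ≤ 3 :=
    card_le_three _ _ _
  have hsd := Finset.le_card_sdiff
    ({X, Y, flipDown ⟨n - 1, by omega⟩ X} : Finset (Fin n → Bool))
    (nbhd X ∪ nbhd (flipDown ⟨n - 1, by omega⟩ X))
  have hcx := card_nbhd X (by omega)
  have hcz := card_nbhd (flipDown ⟨n - 1, by omega⟩ X) (by omega)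
  omega

end AQhelp

set_option maxHeartbeats 1000000 in
/-- Let `n ≥ 5`, let `X` and `Y` be adjacent vertices of `AQ_n`, and let `Z = X̄_n`
(with `Y ≠ Z`), so that `P = (Y, X, Z)` is a path of length two.  Then
`|N(P)| ≥ 6n - 15`. -/
theorem augCube_path_neighborhood_lower_top (n : ℕ) (hn : 5 ≤ n) (X Y Z : Fin n → Bool)
    (hYX : (augCube n).Adj Y X) (hZ : Z = flipDown ⟨n - 1, by omega⟩ X) (hYZ : Y ≠ Z) :
    6 * n - 15 ≤ {W | W ∉ ({X, Y, Z} : Set (Fin n → Bool)) ∧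
      ((augCube n).Adj X W ∨ (augCube n).Adj Y W ∨ (augCube n).Adj Z W)}.ncard := by
  subst hZ
  have hform := hYX.2
  rcases hform with ⟨j, hXf⟩ | ⟨j, hj1, hXf⟩
  · -- Y is a hypercube neighbor of X
    have hY : Y = flipBit j X := by rw [hXf, flipBit_flipBit]
    subst hY
    have hjlt := j.isLt
    by_cases hjA : j.val ≤ 1
    · refine main_count hn X _ hYX
        (Finset.univ \ {⟨0, by omega⟩, ⟨1, by omega⟩})
        ((Finset.univ.filter fun i : Fin n => 1 ≤ i.val) \
          {⟨j.val - 1, by omega⟩, j, ⟨1, by omega⟩, ⟨n - 1, by omega⟩}) ?_ ?_ ?_ ?_ ?_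
      · intro i hi
        rw [Finset.mem_sdiff, Finset.mem_filter] at hi
        exact hi.1.2
      · refine le_trans ?_ (Finset.le_card_sdiff _ _)
        have h2 := card_le_two (⟨0, by omega⟩ : Fin n) ⟨1, by omega⟩
        simp only [Finset.card_univ, Fintype.card_fin]
        omega
      · refine le_trans ?_ (Finset.le_card_sdiff _ _)
        have h4 := card_le_four (⟨j.val - 1, by omega⟩ : Fin n) j ⟨1, by omega⟩ ⟨n - 1, by omega⟩
        rw [card_filter_pos (by omega)]
        omega
      · intro i hi
        have hin := i.isLt
        simp only [Finset.mem_sdiff, Finset.mem_univ, true_and, Finset.mem_insert,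
          Finset.mem_singleton, not_or, Fin.ext_iff, Fin.val_mk] at hi
        exact goodE1 hn X j i (by omega) (by omega) (by omega)
      · intro i hi
        have hin := i.isLt
        simp only [Finset.mem_sdiff, Finset.mem_filter, Finset.mem_univ, true_and,
          Finset.mem_insert, Finset.mem_singleton, not_or, Fin.ext_iff, Fin.val_mk] at hi
        exact goodE2 hn X j i (by omega) (by omega) (by omega) (by omega) (by omega) (by omega)
    · by_cases hjB : n - 2 ≤ j.val
      · refine main_count hn X _ hYX
          (Finset.univ \ {⟨n - 2, by omega⟩, ⟨n - 1, by omega⟩})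
          ((Finset.univ.filter fun i : Fin n => 1 ≤ i.val) \
            {⟨j.val - 1, by omega⟩, j, ⟨n - 3, by omega⟩, ⟨n - 1, by omega⟩}) ?_ ?_ ?_ ?_ ?_
        · intro i hi
          rw [Finset.mem_sdiff, Finset.mem_filter] at hi
          exact hi.1.2
        · refine le_trans ?_ (Finset.le_card_sdiff _ _)
          have h2 := card_le_two (⟨n - 2, by omega⟩ : Fin n) ⟨n - 1, by omega⟩
          simp only [Finset.card_univ, Fintype.card_fin]
          omega
        · refine le_trans ?_ (Finset.le_card_sdiff _ _)
          have h4 := card_le_four (⟨j.val - 1, by omega⟩ : Fin n) j ⟨n - 3, by omega⟩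
            ⟨n - 1, by omega⟩
          rw [card_filter_pos (by omega)]
          omega
        · intro i hi
          have hin := i.isLt
          simp only [Finset.mem_sdiff, Finset.mem_univ, true_and, Finset.mem_insert,
            Finset.mem_singleton, not_or, Fin.ext_iff, Fin.val_mk] at hi
          exact goodE1 hn X j i (by omega) (by omega) (by omega)
        · intro i hi
          have hin := i.isLt
          simp only [Finset.mem_sdiff, Finset.mem_filter, Finset.mem_univ, true_and,
            Finset.mem_insert, Finset.mem_singleton, not_or, Fin.ext_iff, Fin.val_mk] at hi
          exact goodE2 hn X j i (by omega) (by omega) (by omega) (by omega) (by omega) (by omega)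
      · refine main_count hn X _ hYX
          (Finset.univ \ {j})
          ((Finset.univ.filter fun i : Fin n => 1 ≤ i.val) \
            {⟨j.val - 1, by omega⟩, j, ⟨n - 1, by omega⟩}) ?_ ?_ ?_ ?_ ?_
        · intro i hi
          rw [Finset.mem_sdiff, Finset.mem_filter] at hi
          exact hi.1.2
        · refine le_trans ?_ (Finset.le_card_sdiff _ _)
          simp only [Finset.card_univ, Fintype.card_fin, Finset.card_singleton]
          omega
        · refine le_trans ?_ (Finset.le_card_sdiff _ _)
          have h3 := card_le_three (⟨j.val - 1, by omega⟩ : Fin n) j ⟨n - 1, by omega⟩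
          rw [card_filter_pos (by omega)]
          omega
        · intro i hi
          have hin := i.isLt
          simp only [Finset.mem_sdiff, Finset.mem_univ, true_and,
            Finset.mem_singleton, Fin.ext_iff] at hi
          exact goodE1 hn X j i (by omega) (by omega) (by omega)
        · intro i hi
          have hin := i.isLt
          simp only [Finset.mem_sdiff, Finset.mem_filter, Finset.mem_univ, true_and,
            Finset.mem_insert, Finset.mem_singleton, not_or, Fin.ext_iff, Fin.val_mk] at hi
          exact goodE2 hn X j i (by omega) (by omega) (by omega) (by omega) (by omega) (by omega)
  · -- Y is a complement neighbor of X
    have hY : Y = flipDown j X := by rw [hXf, flipDown_flipDown]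
    subst hY
    have hjlt := j.isLt
    have hj2 : j.val ≤ n - 2 := by
      by_contra hcon
      push_neg at hcon
      exact hYZ (by rw [show j = (⟨n - 1, by omega⟩ : Fin n) from
        Fin.ext (by simp only [Fin.val_mk]; omega)])
    by_cases hjC : j.val = 1
    · refine main_count hn X _ hYX
        (Finset.univ \ {j, ⟨j.val + 1, by omega⟩, ⟨0, by omega⟩})
        ((Finset.univ.filter fun i : Fin n => 1 ≤ i.val) \
          {⟨j.val - 1, by omega⟩, j, ⟨j.val + 1, by omega⟩, ⟨n - 1, by omega⟩}) ?_ ?_ ?_ ?_ ?_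
      · intro i hi
        rw [Finset.mem_sdiff, Finset.mem_filter] at hi
        exact hi.1.2
      · refine le_trans ?_ (Finset.le_card_sdiff _ _)
        have h3 := card_le_three j (⟨j.val + 1, by omega⟩ : Fin n) ⟨0, by omega⟩
        simp only [Finset.card_univ, Fintype.card_fin]
        omega
      · refine le_trans ?_ (Finset.le_card_sdiff _ _)
        have h4 := card_le_four (⟨j.val - 1, by omega⟩ : Fin n) j ⟨j.val + 1, by omega⟩
          ⟨n - 1, by omega⟩
        rw [card_filter_pos (by omega)]
        omega
      · intro i hi
        have hin := i.isLt
        simp only [Finset.mem_sdiff, Finset.mem_univ, true_and, Finset.mem_insert,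
          Finset.mem_singleton, not_or, Fin.ext_iff, Fin.val_mk] at hi
        exact goodP1 hn X j i (by omega) (by omega) (by omega) (by omega) (by omega) (by omega)
      · intro i hi
        have hin := i.isLt
        simp only [Finset.mem_sdiff, Finset.mem_filter, Finset.mem_univ, true_and,
          Finset.mem_insert, Finset.mem_singleton, not_or, Fin.ext_iff, Fin.val_mk] at hi
        exact goodP2 hn X j i (by omega) (by omega) (by omega) (by omega) (by omega) (by omega)
          (by omega)
    · refine main_count hn X _ hYX
        (Finset.univ \ {j, ⟨j.val + 1, by omega⟩, ⟨n - 1, by omega⟩})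
        ((Finset.univ.filter fun i : Fin n => 1 ≤ i.val) \
          {⟨j.val - 1, by omega⟩, j, ⟨j.val + 1, by omega⟩, ⟨n - 1, by omega⟩}) ?_ ?_ ?_ ?_ ?_
      · intro i hi
        rw [Finset.mem_sdiff, Finset.mem_filter] at hi
        exact hi.1.2
      · refine le_trans ?_ (Finset.le_card_sdiff _ _)
        have h3 := card_le_three j (⟨j.val + 1, by omega⟩ : Fin n) ⟨n - 1, by omega⟩
        simp only [Finset.card_univ, Fintype.card_fin]
        omega
      · refine le_trans ?_ (Finset.le_card_sdiff _ _)
        have h4 := card_le_four (⟨j.val - 1, by omega⟩ : Fin n) j ⟨j.val + 1, by omega⟩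
          ⟨n - 1, by omega⟩
        rw [card_filter_pos (by omega)]
        omega
      · intro i hi
        have hin := i.isLt
        simp only [Finset.mem_sdiff, Finset.mem_univ, true_and, Finset.mem_insert,
          Finset.mem_singleton, not_or, Fin.ext_iff, Fin.val_mk] at hi
        exact goodP1 hn X j i (by omega) (by omega) (by omega) (by omega) (by omega) (by omega)
      · intro i hi
        have hin := i.isLt
        simp only [Finset.mem_sdiff, Finset.mem_filter, Finset.mem_univ, true_and,
          Finset.mem_insert, Finset.mem_singleton, not_or, Fin.ext_iff, Fin.val_mk] at hi
        exact goodP2 hn X j i (by omega) (by omega) (by omega) (by omega) (by omega) (by omega)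
          (by omega)
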